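/- Let Γ = [1/2; r_1,…,r_m; α] be a blockchain oceanic game with r_1,…,r_m ≥ 0 and α ≥ 1/2, and let Γ⁺ = [1/2; r_1,…,r_m, r_{m+1}; α] be the game obtained by adding a new major miner m+1 with weight r_{m+1} > 0, where Σ_{j=1}^{m+1} r_j ≤ 1/2. Then the value per unit of resource of the new miner in Γ⁺ equals the oceanic value per unit of resource in Γ: φ⁺_{m+1}/r_{m+1} = Φ/α, where φ⁺_{m+1} is the value of miner m+1 in Γ⁺ and Φ is the oceanic value in Γ. -/

import Mathlib

open MeasureTheory Finset
open scoped ENNReal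

/-- The uniform probability measure on the unit cube `[0,1]^m`. -/
noncomputable def cubeMeasure (m : ℕ) : Measure (Fin m → ℝ) :=
  Measure.pi fun _ => volume.restrict (Set.Icc (0:ℝ) 1)

/-- The event that miner `i` is pivotal: with `r(x) = ∑_j r_j · 1{X_j < X_i}`,
`r(X_i) + α·X_i < q ≤ r(X_i) + α·X_i + r_i`. -/
def pivotEvent (m : ℕ) (q α : ℝ) (r : Fin m → ℝ) (i : Fin m) : Set (Fin m → ℝ) :=
  {x | (∑ j, if x j < x i then r j else 0) + α * x i < q ∧
       q ≤ (∑ j, if x j < x i then r j else 0) + α * x i + r i}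

/-- The value `φ_i` of major miner `i` in the blockchain oceanic game
`Γ = [q; r_1,…,r_m; α]`. -/
noncomputable def minerValue (m : ℕ) (q α : ℝ) (r : Fin m → ℝ) (i : Fin m) : ℝ :=
  (cubeMeasure m (pivotEvent m q α r i)).toReal

/-- The oceanic value `Φ = 1 - ∑_i φ_i`. -/
noncomputable def oceanicValue (m : ℕ) (q α : ℝ) (r : Fin m → ℝ) : ℝ :=
  1 - ∑ i, minerValue m q α r i

namespace BO

/-- the pre-jump value of miner `i` -/
noncomputable def U (m : ℕ) (α : ℝ) (r : Fin m → ℝ) (i : Fin m) (x : Fin m → ℝ) : ℝ :=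
  (∑ j, if x j < x i then r j else 0) + α * x i

lemma pivotEvent_eq (m : ℕ) (q α : ℝ) (r : Fin m → ℝ) (i : Fin m) :
    pivotEvent m q α r i = {x | U m α r i x < q ∧ q ≤ U m α r i x + r i} := rfl

lemma measurable_U (m : ℕ) (α : ℝ) (r : Fin m → ℝ) (i : Fin m) :
    Measurable (U m α r i) := by
  have h1 : ∀ j : Fin m, Measurable (fun x : Fin m → ℝ => if x j < x i then r j else 0) := by
    intro j
    have h : MeasurableSet {x : Fin m → ℝ | x j < x i} :=
      measurableSet_lt (measurable_pi_apply j) (measurable_pi_apply i)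
    exact Measurable.ite h measurable_const measurable_const
  exact Measurable.add (Finset.measurable_sum _ fun j _ => h1 j)
    (by fun_prop)

lemma measurableSet_pivotEvent (m : ℕ) (q α : ℝ) (r : Fin m → ℝ) (i : Fin m) :
    MeasurableSet (pivotEvent m q α r i) := by
  rw [pivotEvent_eq]
  exact (measurableSet_lt (measurable_U m α r i) measurable_const).inter
    (measurableSet_le measurable_const ((measurable_U m α r i).add measurable_const))

instance cubeProb (m : ℕ) : IsProbabilityMeasure (cubeMeasure m) := by
  have h : IsProbabilityMeasure (volume.restrict (Set.Icc (0:ℝ) 1)) := by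
    constructor
    rw [Measure.restrict_apply MeasurableSet.univ, Set.univ_inter, Real.volume_Icc]
    norm_num
  exact MeasureTheory.Measure.pi.instIsProbabilityMeasure _

lemma ae_nonneg (m : ℕ) : ∀ᵐ x ∂(cubeMeasure m), ∀ k, 0 ≤ x k := by
  rw [MeasureTheory.ae_all_iff]
  intro k
  have : {x : Fin m → ℝ | ¬ 0 ≤ x k} ⊆ Function.eval k ⁻¹' (Set.Iio 0) := by
    intro x hx; simpa [Set.mem_preimage] using hx
  refine measure_mono_null this (Measure.pi_eval_preimage_null _ ?_)
  rw [Measure.restrict_apply measurableSet_Iio]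
  have : Set.Iio (0:ℝ) ∩ Set.Icc 0 1 = ∅ := by
    ext t; simp only [Set.mem_inter_iff, Set.mem_Iio, Set.mem_Icc, Set.mem_empty_iff_false,
      iff_false]
    rintro ⟨h1, h2, _⟩; linarith
  rw [this, measure_empty]

lemma null_eq_coord {m : ℕ} (k l : Fin m) (hkl : k ≠ l) :
    cubeMeasure m {x | x k = x l} = 0 := by
  cases m with
  | zero => exact absurd (Subsingleton.elim k l) hkl
  | succ m =>
  obtain ⟨l', hl'⟩ := Fin.exists_succAbove_eq (Ne.symm hkl)
  have hmp := measurePreserving_piFinSuccAbove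
    (fun _ : Fin (m+1) => volume.restrict (Set.Icc (0:ℝ) 1)) k
  set S : Set (ℝ × (Fin m → ℝ)) := {p | p.1 = p.2 l'} with hS
  have hSm : MeasurableSet S :=
    measurableSet_eq_fun measurable_fst ((measurable_pi_apply l').comp measurable_snd)
  have hpre : {x : Fin (m+1) → ℝ | x k = x l} =
      (MeasurableEquiv.piFinSuccAbove (fun _ => ℝ) k) ⁻¹' S := by
    ext x
    simp only [Set.mem_setOf_eq, Set.mem_preimage, MeasurableEquiv.piFinSuccAbove_apply, hS]
    rw [← hl']
    rfl
  have : cubeMeasure (m+1) {x | x k = x l} =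
      ((volume.restrict (Set.Icc (0:ℝ) 1)).prod (cubeMeasure m)) S := by
    rw [hpre]
    exact hmp.measure_preimage hSm.nullMeasurableSet
  rw [this, Measure.prod_apply hSm]
  have hz : ∀ t : ℝ, (cubeMeasure m) (Prod.mk t ⁻¹' S) = 0 := by
    intro t
    have hsub : Prod.mk t ⁻¹' S ⊆ Function.eval l' ⁻¹' {t} := by
      intro y hy
      simp only [hS, Set.mem_preimage, Set.mem_setOf_eq] at hy
      simp [Function.eval, hy.symm]
    refine measure_mono_null hsub (Measure.pi_eval_preimage_null _ ?_)
    rw [Measure.restrict_apply (measurableSet_singleton t)]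
    exact measure_mono_null Set.inter_subset_left (measure_singleton t)
  simp only [hz, lintegral_zero]

lemma ae_injective (m : ℕ) : ∀ᵐ x ∂(cubeMeasure m), Function.Injective x := by
  have h : {x : Fin m → ℝ | ¬ Function.Injective x} ⊆
      ⋃ (k : Fin m) (l : Fin m) (_ : k ≠ l), {x | x k = x l} := by
    intro x hx
    simp only [Function.Injective, not_forall] at hx
    obtain ⟨k, l, hkl, hne⟩ := hx
    exact Set.mem_iUnion.2 ⟨k, Set.mem_iUnion.2 ⟨l, Set.mem_iUnion.2 ⟨hne, hkl⟩⟩⟩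
  rw [ae_iff]
  refine measure_mono_null h ?_
  refine measure_iUnion_null fun k => measure_iUnion_null fun l => measure_iUnion_null fun hkl => ?_
  exact null_eq_coord k l hkl



section OneVar
variable {m : ℕ} (α : ℝ) (r y : Fin m → ℝ)

/-- the running total function -/
noncomputable def g (t : ℝ) : ℝ := (∑ k, if y k < t then r k else 0) + α * t

/-- truncated overlap of gap `k` with `(-∞, σ]` -/
noncomputable def c (σ : ℝ) (k : Fin m) : ℝ := min (r k) (max 0 (σ - U m α r k y))

/-- the putative threshold -/
noncomputable def Tv (σ : ℝ) : ℝ := (σ - ∑ k, c α r y σ k) / α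

def Iset (k : Fin m) : Set ℝ := Set.Ioc (U m α r k y) (U m α r k y + r k)
def Jset (σ : ℝ) (k : Fin m) : Set ℝ :=
  Set.Ioc (U m α r k y) (min (U m α r k y + r k) σ)

variable {α r y}

lemma c_nonneg (hr : ∀ k, 0 ≤ r k) (σ : ℝ) (k : Fin m) : 0 ≤ c α r y σ k :=
  le_min (hr k) (le_max_left _ _)

lemma c_mono {σ' σ : ℝ} (h : σ' ≤ σ) (k : Fin m) : c α r y σ' k ≤ c α r y σ k :=
  min_le_min le_rfl (max_le_max le_rfl (by linarith))

lemma vol_J (hr : ∀ k, 0 ≤ r k) (σ : ℝ) (k : Fin m) :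
    volume (Jset α r y σ k) = ENNReal.ofReal (c α r y σ k) := by
  rw [Jset, Real.volume_Ioc, c]
  rcases le_total 0 (σ - U m α r k y) with h | h
  · rw [max_eq_right h]
    have heq : min (U m α r k y + r k) σ - U m α r k y = min (r k) (σ - U m α r k y) := by
      rcases le_total (U m α r k y + r k) σ with h2 | h2
      · rw [min_eq_left h2, min_eq_left (by linarith)]; ring
      · rw [min_eq_right h2, min_eq_right (by linarith)]
    rw [heq]
  · rw [max_eq_left h, min_eq_right (hr k), ENNReal.ofReal_zero, ENNReal.ofReal_eq_zero]
    have h2 : min (U m α r k y + r k) σ ≤ σ := min_le_right _ _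
    linarith

lemma jump_le_g (hα : 0 ≤ α) (hr : ∀ k, 0 ≤ r k) {k : Fin m} {t : ℝ} (h : y k < t) :
    U m α r k y + r k ≤ g α r y t := by
  rw [U, g]
  have hsub : insert k (univ.filter fun j => y j < y k) ⊆ univ.filter fun j => y j < t := by
    intro j hj
    rcases Finset.mem_insert.1 hj with rfl | hj
    · exact Finset.mem_filter.2 ⟨Finset.mem_univ _, h⟩
    · exact Finset.mem_filter.2 ⟨Finset.mem_univ _, (Finset.mem_filter.1 hj).2.trans h⟩
  have hk : k ∉ univ.filter fun j => y j < y k := by simp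
  have h1 : (∑ j, if y j < y k then r j else 0) + r k ≤ ∑ j, if y j < t then r j else 0 := by
    rw [← Finset.sum_filter, ← Finset.sum_filter, add_comm, ← Finset.sum_insert hk]
    exact Finset.sum_le_sum_of_subset_of_nonneg hsub fun j _ _ => hr j
  have h2 : α * y k ≤ α * t := mul_le_mul_of_nonneg_left h.le hα
  linarith

lemma g_le_u (hα : 0 ≤ α) (hr : ∀ k, 0 ≤ r k) {k : Fin m} {t : ℝ} (h : t ≤ y k) :
    g α r y t ≤ U m α r k y := by
  rw [U, g]
  have h1 : (∑ j, if y j < t then r j else 0) ≤ ∑ j, if y j < y k then r j else 0 := by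
    apply Finset.sum_le_sum
    intro j _
    by_cases hj : y j < t
    · rw [if_pos hj, if_pos (hj.trans_le h)]
    · rw [if_neg hj]
      split
      · exact hr j
      · exact le_rfl
  have h2 : α * t ≤ α * y k := mul_le_mul_of_nonneg_left h hα
  linarith

lemma u_nonneg (hα : 0 ≤ α) (hr : ∀ k, 0 ≤ r k) (hy0 : ∀ k, 0 ≤ y k) (k : Fin m) :
    0 ≤ U m α r k y := by
  rw [U]
  have : (0:ℝ) ≤ ∑ j, if y j < y k then r j else 0 :=
    Finset.sum_nonneg fun j _ => by split <;> [exact hr j; exact le_rfl]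
  have := mul_nonneg hα (hy0 k)
  linarith

lemma I_disj (hα : 0 ≤ α) (hr : ∀ k, 0 ≤ r k) (hy : Function.Injective y) :
    Set.PairwiseDisjoint (Set.univ : Set (Fin m)) (Iset α r y) := by
  intro k _ l _ hkl
  have : y k ≠ y l := fun h => hkl (hy h)
  have key : ∀ k l : Fin m, y k < y l → Disjoint (Iset α r y k) (Iset α r y l) := by
    intro k l h
    have h1 := jump_le_g hα hr h
    have hul : g α r y (y l) = U m α r l y := rfl
    rw [hul] at h1
    simp only [Iset]
    rw [Set.Ioc_disjoint_Ioc]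
    exact le_trans (min_le_left _ _) (le_trans h1 (le_max_right _ _))
  rcases this.lt_or_gt with h | h
  · exact key k l h
  · exact (key l k h).symm

lemma sum_c_le (hα : 0 ≤ α) (hr : ∀ k, 0 ≤ r k) (hy : Function.Injective y) (σ : ℝ)
    (K : Finset (Fin m)) {a b : ℝ} (hab : 0 ≤ b - a)
    (hsub : ∀ k ∈ K, Jset α r y σ k ⊆ Set.Ioc a b) :
    ∑ k ∈ K, c α r y σ k ≤ b - a := by
  have hd : Set.PairwiseDisjoint (K : Set (Fin m)) (Jset α r y σ) := by
    refine Set.PairwiseDisjoint.mono ?_ (fun k => Set.Ioc_subset_Ioc le_rfl (min_le_left _ _))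
    exact (I_disj hα hr hy).subset (Set.subset_univ _)
  rw [← ENNReal.ofReal_le_ofReal_iff hab,
    ENNReal.ofReal_sum_of_nonneg (fun k _ => c_nonneg hr σ k)]
  calc ∑ k ∈ K, ENNReal.ofReal (c α r y σ k)
      = ∑ k ∈ K, volume (Jset α r y σ k) := by
        refine Finset.sum_congr rfl fun k _ => (vol_J hr σ k).symm
    _ = volume (⋃ k ∈ K, Jset α r y σ k) :=
        (measure_biUnion_finset hd fun k _ => measurableSet_Ioc).symm
    _ ≤ volume (Set.Ioc a b) := measure_mono (Set.iUnion₂_subset hsub)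
    _ = ENNReal.ofReal (b - a) := Real.volume_Ioc

lemma vol_I (hr : ∀ k, 0 ≤ r k) (k : Fin m) :
    volume (Iset α r y k) = ENNReal.ofReal (r k) := by
  rw [Iset, Real.volume_Ioc, add_sub_cancel_left]

lemma sum_r_le (hα : 0 ≤ α) (hr : ∀ k, 0 ≤ r k) (hy : Function.Injective y) (t σ : ℝ) :
    ∑ k ∈ univ.filter (fun k => y k < t), r k ≤
      (∑ k ∈ univ.filter (fun k => y k < t), c α r y σ k) + max 0 (g α r y t - σ) := by
  set K := univ.filter (fun k => y k < t) with hK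
  have cover : ∀ k ∈ K, Iset α r y k ⊆ Jset α r y σ k ∪ Set.Ioc σ (g α r y t) := by
    intro k hk v hv
    rcases le_or_gt v (min (U m α r k y + r k) σ) with h | h
    · exact Or.inl ⟨hv.1, h⟩
    · refine Or.inr ⟨?_, ?_⟩
      · rcases min_lt_iff.1 h with h2 | h2
        · exact absurd hv.2 (not_le.2 h2)
        · exact h2
      · have hkt : y k < t := (Finset.mem_filter.1 hk).2
        exact hv.2.trans (by linarith [jump_le_g hα hr hkt])
  have hdI : Set.PairwiseDisjoint (K : Set (Fin m)) (Iset α r y) :=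
    (I_disj hα hr hy).subset (Set.subset_univ _)
  have hdJ : Set.PairwiseDisjoint (K : Set (Fin m)) (Jset α r y σ) :=
    hdI.mono fun k => Set.Ioc_subset_Ioc le_rfl (min_le_left _ _)
  have hRHS : (0:ℝ) ≤ (∑ k ∈ K, c α r y σ k) + max 0 (g α r y t - σ) :=
    add_nonneg (Finset.sum_nonneg fun k _ => c_nonneg hr σ k) (le_max_left _ _)
  rw [← ENNReal.ofReal_le_ofReal_iff hRHS]
  have step1 : ENNReal.ofReal (∑ k ∈ K, r k) = volume (⋃ k ∈ K, Iset α r y k) := by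
    rw [ENNReal.ofReal_sum_of_nonneg (fun k _ => hr k),
      measure_biUnion_finset hdI fun k _ => measurableSet_Ioc]
    exact Finset.sum_congr rfl fun k _ => (vol_I hr k).symm
  rw [step1]
  calc volume (⋃ k ∈ K, Iset α r y k)
      ≤ volume ((⋃ k ∈ K, Jset α r y σ k) ∪ Set.Ioc σ (g α r y t)) := by
        refine measure_mono (Set.iUnion₂_subset fun k hk => (cover k hk).trans ?_)
        exact Set.union_subset_union_left _ (Set.subset_biUnion_of_mem hk)
    _ ≤ volume (⋃ k ∈ K, Jset α r y σ k) + volume (Set.Ioc σ (g α r y t)) := measure_union_le _ _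
    _ ≤ ENNReal.ofReal (∑ k ∈ K, c α r y σ k) + ENNReal.ofReal (max 0 (g α r y t - σ)) := by
        gcongr
        · rw [measure_biUnion_finset hdJ fun k _ => measurableSet_Ioc,
            ENNReal.ofReal_sum_of_nonneg (fun k _ => c_nonneg hr σ k)]
          exact le_of_eq (Finset.sum_congr rfl fun k _ => vol_J hr σ k)
        · rw [Real.volume_Ioc]
          exact ENNReal.ofReal_le_ofReal (le_max_right _ _)
    _ = ENNReal.ofReal ((∑ k ∈ K, c α r y σ k) + max 0 (g α r y t - σ)) :=
        (ENNReal.ofReal_add (Finset.sum_nonneg fun k _ => c_nonneg hr σ k)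
          (le_max_left _ _)).symm

lemma t_le_T (hα : 0 < α) (hr : ∀ k, 0 ≤ r k) (hy : Function.Injective y) {t σ : ℝ}
    (ht : 0 ≤ t) (hgt : g α r y t < σ) : t ≤ Tv α r y σ := by
  rw [Tv, le_div_iff₀ hα]
  set K := univ.filter (fun k => y k < t) with hK
  have split : ∑ k, c α r y σ k = (∑ k ∈ K, c α r y σ k) + ∑ k ∈ Kᶜ, c α r y σ k :=
    (Finset.sum_add_sum_compl K _).symm
  have h1 : ∑ k ∈ K, c α r y σ k ≤ ∑ k ∈ K, r k :=
    Finset.sum_le_sum fun k _ => min_le_left _ _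
  have h2 : ∑ k ∈ Kᶜ, c α r y σ k ≤ σ - g α r y t := by
    refine sum_c_le hα.le hr hy σ _ (by linarith) fun k hk => ?_
    have hkt : ¬ y k < t := by simpa [hK] using hk
    have hu : g α r y t ≤ U m α r k y := g_le_u hα.le hr (not_lt.1 hkt)
    exact Set.Ioc_subset_Ioc hu (min_le_right _ _)
  have h3 : g α r y t = (∑ k ∈ K, r k) + α * t := by
    rw [g, Finset.sum_filter]
  nlinarith [mul_le_mul_of_nonneg_left ht hα.le]

lemma T_le_t (hα : 0 < α) (hr : ∀ k, 0 ≤ r k) (hy : Function.Injective y) {t σ : ℝ}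
    (hσg : σ ≤ g α r y t) : Tv α r y σ ≤ t := by
  rw [Tv, div_le_iff₀ hα]
  set K := univ.filter (fun k => y k < t) with hK
  have h1 := sum_r_le hα.le hr hy t σ
  rw [max_eq_right (by linarith)] at h1
  have h2 : ∑ k ∈ K, c α r y σ k ≤ ∑ k, c α r y σ k := by
    refine Finset.sum_le_sum_of_subset_of_nonneg (Finset.subset_univ _)
      fun k _ _ => c_nonneg hr σ k
  have h3 : g α r y t = (∑ k ∈ K, r k) + α * t := by
    rw [g, Finset.sum_filter]
  linarith

lemma T_nonneg (hα : 0 < α) (hr : ∀ k, 0 ≤ r k) (hy : Function.Injective y)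
    (hy0 : ∀ k, 0 ≤ y k) {σ : ℝ} (hσ : 0 ≤ σ) : 0 ≤ Tv α r y σ := by
  rw [Tv]
  apply div_nonneg _ hα.le
  have := sum_c_le hα.le hr hy σ univ (a := 0) (b := σ) (by linarith) fun k _ => ?_
  · linarith
  · exact Set.Ioc_subset_Ioc (u_nonneg hα.le hr hy0 k) (min_le_right _ _)

lemma T_le_one (hα : 0 < α) (hr : ∀ k, 0 ≤ r k) (hy : Function.Injective y) {σ : ℝ}
    (hσα : σ ≤ α) : Tv α r y σ ≤ 1 := by
  refine (T_le_t hα hr hy (t := 1) ?_).trans_eq (by norm_num)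
  rw [g]
  have : (0:ℝ) ≤ ∑ k, if y k < 1 then r k else 0 :=
    Finset.sum_nonneg fun k _ => by split <;> [exact hr k; exact le_rfl]
  linarith

lemma measurable_g : Measurable (g α r y) := by
  have h1 : ∀ k : Fin m, Measurable (fun t : ℝ => if y k < t then r k else 0) := fun k =>
    Measurable.ite measurableSet_Ioi measurable_const measurable_const
  exact Measurable.add (Finset.measurable_sum _ fun k _ => h1 k) (measurable_id.const_mul α)

lemma vol_lt (hα : 0 < α) (hr : ∀ k, 0 ≤ r k) (hy : Function.Injective y)
    (hy0 : ∀ k, 0 ≤ y k) {σ : ℝ} (hσ0 : 0 ≤ σ) (hσα : σ ≤ α) :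
    volume ({t | g α r y t < σ} ∩ Set.Icc 0 1) = ENNReal.ofReal (Tv α r y σ) := by
  have hT0 := T_nonneg hα hr hy hy0 hσ0
  have hT1 := T_le_one hα hr hy hσα
  have hsub1 : Set.Ico 0 (Tv α r y σ) ⊆ {t | g α r y t < σ} ∩ Set.Icc 0 1 := by
    intro t ht
    refine ⟨?_, ht.1, ht.2.le.trans hT1⟩
    by_contra hc
    exact absurd (T_le_t hα hr hy (not_lt.1 hc)) (not_le.2 ht.2)
  have hsub2 : {t | g α r y t < σ} ∩ Set.Icc 0 1 ⊆ Set.Icc 0 (Tv α r y σ) := by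
    intro t ⟨h1, h2, _⟩
    exact ⟨h2, t_le_T hα hr hy h2 h1⟩
  refine le_antisymm ?_ ?_
  · exact (measure_mono hsub2).trans_eq (by rw [Real.volume_Icc, sub_zero])
  · exact le_trans (le_of_eq (by rw [Real.volume_Ico, sub_zero])) (measure_mono hsub1)

lemma T_mono (hα : 0 < α) (hr : ∀ k, 0 ≤ r k) {σ' σ : ℝ} (h : σ' ≤ σ)
    (hd : ∑ k, (c α r y σ k - c α r y σ' k) ≤ σ - σ') : Tv α r y σ' ≤ Tv α r y σ := by
  have hs : ∑ k, c α r y σ k - ∑ k, c α r y σ' k ≤ σ - σ' := by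
    rw [← Finset.sum_sub_distrib]; exact hd
  rw [Tv, Tv]
  have h2 : σ' - ∑ k, c α r y σ' k ≤ σ - ∑ k, c α r y σ k := by linarith
  gcongr

lemma ofReal_dc (hr : ∀ k, 0 ≤ r k) {σ' σ : ℝ} (h : σ' ≤ σ) (k : Fin m) :
    ENNReal.ofReal (c α r y σ k - c α r y σ' k) =
      volume (Iset α r y k ∩ Set.Ioc σ' σ) := by
  have hsub : Jset α r y σ' k ⊆ Jset α r y σ k :=
    Set.Ioc_subset_Ioc le_rfl (min_le_min le_rfl h)
  have hdiff : Jset α r y σ k \ Jset α r y σ' k = Iset α r y k ∩ Set.Ioc σ' σ := by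
    ext v
    simp only [Jset, Iset, Set.mem_diff, Set.mem_Ioc, Set.mem_inter_iff, Set.mem_setOf_eq]
    constructor
    · rintro ⟨⟨h1, h2⟩, h3⟩
      refine ⟨⟨h1, (le_min_iff.1 h2).1⟩, ?_, (le_min_iff.1 h2).2⟩
      by_contra hc
      exact h3 ⟨h1, le_min_iff.2 ⟨(le_min_iff.1 h2).1, not_lt.1 hc⟩⟩
    · rintro ⟨⟨h1, h2⟩, h3, h4⟩
      refine ⟨⟨h1, le_min_iff.2 ⟨h2, h4⟩⟩, fun hc => ?_⟩
      exact absurd (hc.2.trans (min_le_right _ _)) (not_le.2 h3)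
  rw [ENNReal.ofReal_sub _ (c_nonneg hr σ' k), ← vol_J hr σ k, ← vol_J hr σ' k, ← hdiff,
    measure_diff hsub measurableSet_Ioc.nullMeasurableSet measure_Ioc_lt_top.ne]

lemma sum_dc_le (hα : 0 ≤ α) (hr : ∀ k, 0 ≤ r k) (hy : Function.Injective y)
    {σ' σ : ℝ} (h : σ' ≤ σ) :
    ∑ k, (c α r y σ k - c α r y σ' k) ≤ σ - σ' := by
  have hd : Set.PairwiseDisjoint (Set.univ : Set (Fin m))
      (fun k => Iset α r y k ∩ Set.Ioc σ' σ) :=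
    (I_disj hα hr hy).mono fun k => Set.inter_subset_left
  rw [← ENNReal.ofReal_le_ofReal_iff (by linarith),
    ENNReal.ofReal_sum_of_nonneg (fun k _ => by linarith [c_mono (y := y) (r := r) (α := α) h k])]
  calc ∑ k, ENNReal.ofReal (c α r y σ k - c α r y σ' k)
      = ∑ k, volume (Iset α r y k ∩ Set.Ioc σ' σ) :=
        Finset.sum_congr rfl fun k _ => ofReal_dc hr h k
    _ = volume (⋃ k ∈ (univ : Finset (Fin m)), Iset α r y k ∩ Set.Ioc σ' σ) :=
        (measure_biUnion_finset (by simpa using hd) fun k _ => by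
          simp only [Iset]; exact measurableSet_Ioc.inter measurableSet_Ioc).symm
    _ ≤ volume (Set.Ioc σ' σ) :=
        measure_mono (Set.iUnion₂_subset fun k _ => Set.inter_subset_right)
    _ = ENNReal.ofReal (σ - σ') := Real.volume_Ioc

lemma vol_slice (hα : 0 < α) (hr : ∀ k, 0 ≤ r k) (hy : Function.Injective y)
    (hy0 : ∀ k, 0 ≤ y k) {σ' σ : ℝ} (h0 : 0 ≤ σ') (h1 : σ' ≤ σ) (h2 : σ ≤ α) :
    volume ({t | σ' ≤ g α r y t ∧ g α r y t < σ} ∩ Set.Icc 0 1)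
      = ENNReal.ofReal (((σ - σ') - ∑ k, (c α r y σ k - c α r y σ' k)) / α) := by
  have key : {t | σ' ≤ g α r y t ∧ g α r y t < σ} ∩ Set.Icc 0 1 =
      ({t | g α r y t < σ} ∩ Set.Icc 0 1) \ ({t | g α r y t < σ'} ∩ Set.Icc 0 1) := by
    ext t
    simp only [Set.mem_inter_iff, Set.mem_diff, Set.mem_setOf_eq]
    constructor
    · rintro ⟨⟨ha, hb⟩, hI⟩
      exact ⟨⟨hb, hI⟩, fun hc => absurd hc.1 (not_lt.2 ha)⟩
    · rintro ⟨⟨ha, hI⟩, hb⟩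
      exact ⟨⟨not_lt.1 fun hlt => hb ⟨hlt, hI⟩, ha⟩, hI⟩
  have hmB : NullMeasurableSet ({t | g α r y t < σ'} ∩ Set.Icc 0 1) volume :=
    (((measurable_g (α := α) (r := r) (y := y)) measurableSet_Iio).inter
      measurableSet_Icc).nullMeasurableSet
  have hfin : volume ({t | g α r y t < σ'} ∩ Set.Icc (0:ℝ) 1) ≠ ⊤ := by
    refine ((measure_mono Set.inter_subset_right).trans_lt ?_).ne
    rw [Real.volume_Icc]
    exact ENNReal.ofReal_lt_top
  have hBA : ({t | g α r y t < σ'} ∩ Set.Icc (0:ℝ) 1) ⊆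
      ({t | g α r y t < σ} ∩ Set.Icc 0 1) :=
    Set.inter_subset_inter_left _ fun t ht => lt_of_lt_of_le ht h1
  have hTv : Tv α r y σ - Tv α r y σ' =
      ((σ - σ') - ∑ k, (c α r y σ k - c α r y σ' k)) / α := by
    rw [Tv, Tv, Finset.sum_sub_distrib]
    field_simp
    ring
  rw [key, measure_diff hBA hmB hfin, vol_lt hα hr hy hy0 (h0.trans h1) h2,
    vol_lt hα hr hy hy0 h0 (h1.trans h2),
    ← ENNReal.ofReal_sub _ (T_nonneg hα hr hy hy0 h0), hTv]

end OneVar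

section Master
variable {m : ℕ}

lemma measurable_c (α : ℝ) (r : Fin m → ℝ) (σ : ℝ) (k : Fin m) :
    Measurable (fun y : Fin m → ℝ => c α r y σ k) := by
  have h : Measurable (fun y : Fin m → ℝ => U m α r k y) := measurable_U m α r k
  exact measurable_const.min (measurable_const.max (measurable_const.sub h))

lemma master (α : ℝ) (hα : 0 < α) (r : Fin (m+1) → ℝ) (hr : ∀ j, 0 ≤ r j)
    (i : Fin (m+1)) (s : ℝ) (h0 : 0 ≤ s - r i) (hsα : s ≤ α) :
    cubeMeasure (m+1) (pivotEvent (m+1) s α r i) =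
      ENNReal.ofReal (1/α) * (ENNReal.ofReal (r i) -
        ∫⁻ v in Set.Ioc (s - r i) s,
          ∑ k, cubeMeasure m (pivotEvent m v α (r ∘ i.succAbove) k) ∂volume) := by
  set r' : Fin m → ℝ := r ∘ i.succAbove with hr'def
  have hr'pos : ∀ k, 0 ≤ r' k := fun k => hr _
  set w : ℝ := r i with hwdef
  -- the set in product coordinates
  set S : Set (ℝ × (Fin m → ℝ)) :=
    {p | s - w ≤ g α r' p.2 p.1 ∧ g α r' p.2 p.1 < s} with hSdef
  have hgmeas : Measurable (fun p : ℝ × (Fin m → ℝ) => g α r' p.2 p.1) := by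
    have h1 : ∀ k : Fin m, Measurable (fun p : ℝ × (Fin m → ℝ) =>
        if p.2 k < p.1 then r' k else 0) := by
      intro k
      refine Measurable.ite ?_ measurable_const measurable_const
      exact measurableSet_lt (by fun_prop) (by fun_prop)
    exact Measurable.add (Finset.measurable_sum _ fun k _ => h1 k)
      (measurable_fst.const_mul α)
  have hSm : MeasurableSet S :=
    (measurableSet_le measurable_const hgmeas).inter (measurableSet_lt hgmeas measurable_const)
  have hpre : pivotEvent (m+1) s α r i =
      (MeasurableEquiv.piFinSuccAbove (fun _ : Fin (m+1) => ℝ) i) ⁻¹' S := by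
    ext x
    simp only [pivotEvent, Set.mem_setOf_eq, Set.mem_preimage,
      MeasurableEquiv.piFinSuccAbove_apply, Fin.insertNthEquiv_symm_apply, Fin.removeNth,
      hSdef, g]
    have hsum : (∑ j, if x j < x i then r j else 0) =
        ∑ k, if x (i.succAbove k) < x i then r' k else 0 := by
      rw [Fin.sum_univ_succAbove (fun j => if x j < x i then r j else 0) i, if_neg (lt_irrefl _)]
      rw [zero_add]
      rfl
    rw [hsum]
    constructor
    · rintro ⟨h1, h2⟩; exact ⟨by grind, by grind⟩
    · rintro ⟨h1, h2⟩; exact ⟨by grind, by grind⟩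
  have hmp := measurePreserving_piFinSuccAbove
    (fun _ : Fin (m+1) => volume.restrict (Set.Icc (0:ℝ) 1)) i
  have step1 : cubeMeasure (m+1) (pivotEvent (m+1) s α r i) =
      ((volume.restrict (Set.Icc (0:ℝ) 1)).prod (cubeMeasure m)) S := by
    rw [hpre]
    exact hmp.measure_preimage hSm.nullMeasurableSet
  have step2 : ((volume.restrict (Set.Icc (0:ℝ) 1)).prod (cubeMeasure m)) S =
      ∫⁻ y, volume ({t | s - w ≤ g α r' y t ∧ g α r' y t < s} ∩ Set.Icc 0 1)
        ∂(cubeMeasure m) := by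
    rw [Measure.prod_apply_symm hSm]
    refine lintegral_congr fun y => ?_
    rw [Measure.restrict_apply' measurableSet_Icc]
    rfl
  -- a.e. slice formula
  set D : (Fin m → ℝ) → ℝ := fun y => ∑ k, (c α r' y s k - c α r' y (s - w) k) with hDdef
  have hDmeas : Measurable D := by
    refine Finset.measurable_sum _ fun k _ => Measurable.sub ?_ ?_ <;>
      exact measurable_c α r' _ k
  have hslice : ∀ᵐ y ∂(cubeMeasure m),
      volume ({t | s - w ≤ g α r' y t ∧ g α r' y t < s} ∩ Set.Icc 0 1) =
        ENNReal.ofReal (1/α) * (ENNReal.ofReal w - ENNReal.ofReal (D y)) := by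
    filter_upwards [ae_injective m, ae_nonneg m] with y hy hy0
    rw [vol_slice hα hr'pos hy hy0 h0 (by linarith [hr i]) hsα]
    have hD0 : 0 ≤ D y := by
      refine Finset.sum_nonneg fun k _ => ?_
      have := c_mono (α := α) (r := r') (y := y) (show s - w ≤ s by linarith [hr i]) k
      linarith
    have heq : ((s - (s - w)) - D y) / α = (1/α) * (w - D y) := by ring
    rw [heq, ENNReal.ofReal_mul (by positivity), ENNReal.ofReal_sub _ hD0]
  have step3 : (∫⁻ y, volume ({t | s - w ≤ g α r' y t ∧ g α r' y t < s} ∩ Set.Icc 0 1)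
        ∂(cubeMeasure m)) =
      ENNReal.ofReal (1/α) *
        ∫⁻ y, (ENNReal.ofReal w - ENNReal.ofReal (D y)) ∂(cubeMeasure m) := by
    rw [lintegral_congr_ae hslice]
    exact lintegral_const_mul _ (measurable_const.sub hDmeas.ennreal_ofReal)
  -- compute ∫⁻ (ofReal w - ofReal (D y))
  have hDle : ∀ᵐ y ∂(cubeMeasure m), ENNReal.ofReal (D y) ≤ ENNReal.ofReal w := by
    filter_upwards [ae_injective m] with y hy
    refine ENNReal.ofReal_le_ofReal ?_
    have h := sum_dc_le hα.le hr'pos hy (show s - w ≤ s by linarith [hr i])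
    rw [hDdef]
    linarith
  have hDfin : (∫⁻ y, ENNReal.ofReal (D y) ∂(cubeMeasure m)) ≠ ⊤ := by
    refine ne_of_lt (lt_of_le_of_lt (lintegral_mono_ae hDle) ?_)
    rw [lintegral_const, measure_univ, mul_one]
    exact ENNReal.ofReal_lt_top
  have step4 : (∫⁻ y, (ENNReal.ofReal w - ENNReal.ofReal (D y)) ∂(cubeMeasure m)) =
      ENNReal.ofReal w - ∫⁻ y, ENNReal.ofReal (D y) ∂(cubeMeasure m) := by
    rw [lintegral_sub hDmeas.ennreal_ofReal hDfin hDle, lintegral_const, measure_univ, mul_one]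
  -- identify ∫⁻ ofReal (D y) with the v-integral
  have hσ'σ : s - w ≤ s := by linarith [hr i]
  have step5 : (∫⁻ y, ENNReal.ofReal (D y) ∂(cubeMeasure m)) =
      ∫⁻ v in Set.Ioc (s - w) s,
        ∑ k, cubeMeasure m (pivotEvent m v α r' k) ∂volume := by
    have hpt : ∀ y : Fin m → ℝ, ENNReal.ofReal (D y) =
        ∑ k, volume (Iset α r' y k ∩ Set.Ioc (s - w) s) := by
      intro y
      rw [hDdef]
      rw [ENNReal.ofReal_sum_of_nonneg (fun k _ => by
        have := c_mono (α := α) (r := r') (y := y) hσ'σ k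
        linarith)]
      exact Finset.sum_congr rfl fun k _ => ofReal_dc hr'pos hσ'σ k
    -- product sets
    set Q : Fin m → Set ((Fin m → ℝ) × ℝ) := fun k =>
      {p | U m α r' k p.1 < p.2} ∩ {p | p.2 ≤ U m α r' k p.1 + r' k} ∩
        {p | p.2 ∈ Set.Ioc (s - w) s} with hQdef
    have hQm : ∀ k, MeasurableSet (Q k) := by
      intro k
      have hu : Measurable (fun p : (Fin m → ℝ) × ℝ => U m α r' k p.1) :=
        (measurable_U m α r' k).comp measurable_fst
      exact ((measurableSet_lt hu measurable_snd).inter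
        (measurableSet_le measurable_snd (hu.add measurable_const))).inter
        (measurable_snd measurableSet_Ioc)
    have hQpre : ∀ k y, Prod.mk y ⁻¹' Q k = Iset α r' y k ∩ Set.Ioc (s - w) s := by
      intro k y
      ext v
      simp only [hQdef, Set.mem_preimage, Set.mem_inter_iff, Set.mem_setOf_eq, Iset,
        Set.mem_Ioc]
    -- per-k identity
    have hk : ∀ k : Fin m, (∫⁻ y, volume (Iset α r' y k ∩ Set.Ioc (s - w) s)
        ∂(cubeMeasure m)) =
        ∫⁻ v in Set.Ioc (s - w) s, cubeMeasure m (pivotEvent m v α r' k) ∂volume := by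
      intro k
      have h1 : (∫⁻ y, volume (Iset α r' y k ∩ Set.Ioc (s - w) s) ∂(cubeMeasure m)) =
          ((cubeMeasure m).prod volume) (Q k) := by
        rw [Measure.prod_apply (hQm k)]
        exact lintegral_congr fun y => by rw [hQpre k y]
      have h2 : ((cubeMeasure m).prod volume) (Q k) =
          ∫⁻ v, cubeMeasure m ((fun y : Fin m → ℝ => (y, v)) ⁻¹' Q k) ∂volume :=
        Measure.prod_apply_symm (hQm k)
      have h3 : ∀ v : ℝ, cubeMeasure m ((fun y : Fin m → ℝ => (y, v)) ⁻¹' Q k) =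
          (Set.Ioc (s - w) s).indicator
            (fun v => cubeMeasure m (pivotEvent m v α r' k)) v := by
        intro v
        by_cases hv : v ∈ Set.Ioc (s - w) s
        · rw [Set.indicator_of_mem hv]
          congr 1
          ext y
          simp only [hQdef, Set.mem_preimage, Set.mem_inter_iff, Set.mem_setOf_eq,
            pivotEvent_eq, hv]
          tauto
        · rw [Set.indicator_of_notMem hv]
          convert measure_empty
          · ext y
            simp only [hQdef, Set.mem_preimage, Set.mem_inter_iff, Set.mem_setOf_eq,
              Set.mem_empty_iff_false, iff_false]
            tauto
          · infer_instance
      rw [h1, h2]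
      rw [lintegral_congr h3]
      exact lintegral_indicator measurableSet_Ioc _
    have hmeasv : ∀ k : Fin m, Measurable
        (fun v : ℝ => cubeMeasure m (pivotEvent m v α r' k)) := by
      intro k
      set Q' : Set (ℝ × (Fin m → ℝ)) :=
        {p | U m α r' k p.2 < p.1} ∩ {p | p.1 ≤ U m α r' k p.2 + r' k} with hQ'def
      have hu : Measurable (fun p : ℝ × (Fin m → ℝ) => U m α r' k p.2) :=
        (measurable_U m α r' k).comp measurable_snd
      have hQ'm : MeasurableSet Q' :=
        (measurableSet_lt hu measurable_fst).inter
          (measurableSet_le measurable_fst (hu.add measurable_const))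
      have hmm := measurable_measure_prodMk_left (ν := cubeMeasure m) hQ'm
      have heq : (fun v : ℝ => cubeMeasure m (pivotEvent m v α r' k)) =
          fun v => cubeMeasure m (Prod.mk v ⁻¹' Q') := by
        funext v
        congr 1
      rw [heq]
      exact hmm
    calc (∫⁻ y, ENNReal.ofReal (D y) ∂(cubeMeasure m))
        = ∫⁻ y, ∑ k, volume (Iset α r' y k ∩ Set.Ioc (s - w) s) ∂(cubeMeasure m) :=
          lintegral_congr hpt
      _ = ∑ k, ∫⁻ y, volume (Iset α r' y k ∩ Set.Ioc (s - w) s) ∂(cubeMeasure m) := by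
          refine lintegral_finset_sum _ fun k _ => ?_
          have hmm := measurable_measure_prodMk_left (ν := volume) (hQm k)
          have heq : (fun y => volume (Iset α r' y k ∩ Set.Ioc (s - w) s)) =
              fun y => volume (Prod.mk y ⁻¹' Q k) := by
            funext y; rw [hQpre k y]
          rw [heq]
          exact hmm
      _ = ∑ k, ∫⁻ v in Set.Ioc (s - w) s, cubeMeasure m (pivotEvent m v α r' k) ∂volume :=
          Finset.sum_congr rfl fun k _ => hk k
      _ = ∫⁻ v in Set.Ioc (s - w) s, ∑ k, cubeMeasure m (pivotEvent m v α r' k) ∂volume :=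
          (lintegral_finset_sum _ fun k _ => (hmeasv k)).symm
  rw [step1, step2, step3, step4, step5]

lemma sum_pivot_const (α : ℝ) (hα : 0 < α) :
    ∀ (m : ℕ) (r : Fin m → ℝ), (∀ j, 0 ≤ r j) → ∀ (s s' : ℝ),
      (∑ j, r j) ≤ s → s ≤ α → (∑ j, r j) ≤ s' → s' ≤ α → ∀ k,
      cubeMeasure m (pivotEvent m s α r k) = cubeMeasure m (pivotEvent m s' α r k) := by
  intro m
  induction m with
  | zero => exact fun r _ s s' _ _ _ _ k => k.elim0
  | succ m IH =>
    intro r hr s s' hs1 hs2 hs1' hs2' k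
    have hrk : r k ≤ ∑ j, r j :=
      Finset.single_le_sum (fun j _ => hr j) (Finset.mem_univ k)
    have hR' : r k + ∑ j, (r ∘ k.succAbove) j = ∑ j, r j :=
      (Fin.sum_univ_succAbove r k).symm
    have hR'nn : (0:ℝ) ≤ ∑ j, (r ∘ k.succAbove) j :=
      Finset.sum_nonneg fun j _ => hr _
    set R' : ℝ := ∑ j, (r ∘ k.succAbove) j with hR'def
    have hint : ∀ sx : ℝ, (∑ j, r j) ≤ sx → sx ≤ α →
        (∫⁻ v in Set.Ioc (sx - r k) sx,
          ∑ j, cubeMeasure m (pivotEvent m v α (r ∘ k.succAbove) j) ∂volume) =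
        (∑ j, cubeMeasure m (pivotEvent m R' α (r ∘ k.succAbove) j)) *
          ENNReal.ofReal (r k) := by
      intro sx hx1 hx2
      have hcong : ∀ v ∈ Set.Ioc (sx - r k) sx,
          (∑ j, cubeMeasure m (pivotEvent m v α (r ∘ k.succAbove) j)) =
          ∑ j, cubeMeasure m (pivotEvent m R' α (r ∘ k.succAbove) j) := by
        intro v hv
        refine Finset.sum_congr rfl fun j _ =>
          IH (r ∘ k.succAbove) (fun j => hr _) v R' ?_ ?_ ?_ ?_ j
        · have := hv.1; linarith
        · exact hv.2.trans hx2
        · exact le_rfl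
        · linarith [hr k]
      rw [setLIntegral_congr_fun measurableSet_Ioc hcong,
        setLIntegral_const, Real.volume_Ioc, show sx - (sx - r k) = r k by ring]
    rw [master α hα r hr k s (by linarith) hs2,
      master α hα r hr k s' (by linarith) hs2', hint s hs1 hs2, hint s' hs1' hs2']

lemma sum_pivot_le_one (m : ℕ) (q α : ℝ) (hα : 0 ≤ α) (r : Fin m → ℝ)
    (hr : ∀ j, 0 ≤ r j) :
    ∑ k, cubeMeasure m (pivotEvent m q α r k) ≤ 1 := by
  classical
  set Inj := {x : Fin m → ℝ | Function.Injective x} with hInjdef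
  have hInj : MeasurableSet Inj := by
    have heq : Inj = ⋂ (k) (l) (_ : k ≠ l), {x : Fin m → ℝ | x k = x l}ᶜ := by
      ext x
      simp only [hInjdef, Set.mem_setOf_eq, Set.mem_iInter, Set.mem_compl_iff]
      constructor
      · intro h k l hkl he; exact hkl (h he)
      · intro h a b hab; by_contra hne; exact h a b hne hab
    rw [heq]
    exact MeasurableSet.iInter fun k => MeasurableSet.iInter fun l =>
      MeasurableSet.iInter fun _ =>
        (measurableSet_eq_fun (measurable_pi_apply k) (measurable_pi_apply l)).compl
  have hInjc : cubeMeasure m Injᶜ = 0 := by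
    have := ae_injective m
    rwa [ae_iff] at this
  have hcong : ∀ k, cubeMeasure m (pivotEvent m q α r k) =
      cubeMeasure m (pivotEvent m q α r k ∩ Inj) :=
    fun k => (measure_inter_conull hInjc).symm
  have hdisj : Set.PairwiseDisjoint (↑(univ : Finset (Fin m)))
      (fun k => pivotEvent m q α r k ∩ Inj) := by
    intro k _ l _ hkl
    simp only [Function.onFun]
    rw [Set.disjoint_left]
    rintro x ⟨hx1, hx2⟩ ⟨hy1, _⟩
    rw [pivotEvent_eq] at hx1 hy1
    have hne : x k ≠ x l := fun h => hkl (hx2 h)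
    have key : ∀ a b : Fin m, x a < x b → U m α r a x + r a ≤ U m α r b x :=
      fun a b hab => jump_le_g hα hr hab
    rcases hne.lt_or_gt with h | h
    · exact absurd hy1.1 (not_lt.2 (hx1.2.trans (key k l h)))
    · exact absurd hx1.1 (not_lt.2 (hy1.2.trans (key l k h)))
  calc ∑ k, cubeMeasure m (pivotEvent m q α r k)
      = ∑ k, cubeMeasure m (pivotEvent m q α r k ∩ Inj) :=
        Finset.sum_congr rfl fun k _ => hcong k
    _ = cubeMeasure m (⋃ k ∈ (univ : Finset (Fin m)), pivotEvent m q α r k ∩ Inj) :=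
        (measure_biUnion_finset hdisj fun k _ =>
          (measurableSet_pivotEvent m q α r k).inter hInj).symm
    _ ≤ 1 := by
        rw [← measure_univ (μ := cubeMeasure m)]
        exact measure_mono (Set.subset_univ _)

end Master
end BO

/-- Entry theorem (q = 1/2): the value per unit of resource of a newly entering miner
in `Γ⁺` equals the oceanic value per unit of resource in `Γ`. -/
theorem stmt_1 (m : ℕ) (α : ℝ) (r : Fin m → ℝ) (w : ℝ) (hr : ∀ j, 0 ≤ r j)
    (hα : 1 / 2 ≤ α) (hw : 0 < w) (hsum : (∑ j, r j) + w ≤ 1 / 2) :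
    minerValue (m + 1) (1 / 2) α (Fin.snoc r w) (Fin.last m) / w =
      oceanicValue m (1 / 2) α r / α := by
  classical
  have hα0 : (0:ℝ) < α := lt_of_lt_of_le (by norm_num) hα
  have hrs : (0:ℝ) ≤ ∑ j, r j := Finset.sum_nonneg fun j _ => hr j
  set r' : Fin (m+1) → ℝ := Fin.snoc r w with hr'def
  have hr'pos : ∀ j, 0 ≤ r' j := by
    intro j
    refine Fin.lastCases ?_ ?_ j
    · rw [hr'def]; rw [Fin.snoc_last]; exact hw.le
    · intro j; rw [hr'def]; rw [Fin.snoc_castSucc]; exact hr j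
  have hlast : r' (Fin.last m) = w := by rw [hr'def, Fin.snoc_last]
  have hcomp : r' ∘ (Fin.last m).succAbove = r := by
    funext j
    have : (Fin.last m).succAbove j = Fin.castSucc j := by
      rw [Fin.succAbove_last]
    rw [Function.comp_apply, this, hr'def, Fin.snoc_castSucc]
  have hmaster := BO.master α hα0 r' hr'pos (Fin.last m) (1/2)
    (by rw [hlast]; linarith) hα
  rw [hlast, hcomp] at hmaster
  set Sg : ℝ≥0∞ := ∑ k, cubeMeasure m (pivotEvent m (1/2) α r k) with hSgdef
  have hSg1 : Sg ≤ 1 := BO.sum_pivot_le_one m (1/2) α hα0.le r hr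
  have hint : (∫⁻ v in Set.Ioc (1/2 - w) (1/2),
      ∑ k, cubeMeasure m (pivotEvent m v α r k) ∂volume) = Sg * ENNReal.ofReal w := by
    have hcong : ∀ v ∈ Set.Ioc (1/2 - w) (1/2:ℝ),
        (∑ k, cubeMeasure m (pivotEvent m v α r k)) = Sg := by
      intro v hv
      refine Finset.sum_congr rfl fun k _ =>
        BO.sum_pivot_const α hα0 m r hr v (1/2) ?_ ?_ ?_ ?_ k
      · have := hv.1; linarith
      · exact hv.2.trans hα
      · linarith
      · exact hα
    rw [setLIntegral_congr_fun measurableSet_Ioc hcong,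
      setLIntegral_const, Real.volume_Ioc, show (1/2:ℝ) - (1/2 - w) = w by ring]
  rw [hint] at hmaster
  -- convert to reals
  have hb : Sg * ENNReal.ofReal w ≤ ENNReal.ofReal w := by
    calc Sg * ENNReal.ofReal w ≤ 1 * ENNReal.ofReal w := mul_le_mul_left hSg1 _
      _ = ENNReal.ofReal w := one_mul _
  have hSgfin : Sg ≠ ⊤ := (lt_of_le_of_lt hSg1 (by norm_num)).ne
  have htor : minerValue (m + 1) (1 / 2) α r' (Fin.last m) =
      (1/α) * (w - Sg.toReal * w) := by
    rw [minerValue, hmaster, ENNReal.toReal_mul, ENNReal.toReal_ofReal (by positivity),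
      ENNReal.toReal_sub_of_le hb ENNReal.ofReal_ne_top, ENNReal.toReal_mul,
      ENNReal.toReal_ofReal hw.le]
  have hocean : oceanicValue m (1/2) α r = 1 - Sg.toReal := by
    rw [oceanicValue, hSgdef, ENNReal.toReal_sum (fun k _ => measure_ne_top _ _)]
    rfl
  rw [htor, hocean]
  have hSgr : Sg.toReal ≤ 1 := by
    calc Sg.toReal ≤ (1:ℝ≥0∞).toReal := ENNReal.toReal_mono (by norm_num) hSg1
      _ = 1 := by norm_num
  field_simp
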